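/- Let K/k be a finite extension of fields of odd degree (the dimension of K as a k-vector space is odd). If an element a ∈ k becomes a square in K (there exists b ∈ K with b² equal to the image of a), then a is already a square in k (there exists c ∈ k with c² = a). -/
import Mathlib

/-- Let `K/k` be a finite field extension of odd degree. If `a ∈ k` becomes a
square in `K`, then `a` is already a square in `k`. -/
theorem isSquare_of_isSquare_odd_degree_extension
    {k K : Type*} [Field k] [Field K] [Algebra k K] [FiniteDimensional k K]
    (hodd : Odd (Module.finrank k K))
    (a : k) (b : K) (hb : b ^ 2 = algebraMap k K a) :
    ∃ c : k, c ^ 2 = a := by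
  have hint : IsIntegral k b := IsIntegral.of_finite k b
  have hdvd : (minpoly k b).natDegree ∣ Module.finrank k K := minpoly.degree_dvd hint
  have haev : Polynomial.aeval b (Polynomial.X ^ 2 - Polynomial.C a) = 0 := by
    simp [hb]
  have hdvd2 : minpoly k b ∣ Polynomial.X ^ 2 - Polynomial.C a := minpoly.dvd k b haev
  have hne : (Polynomial.X ^ 2 - Polynomial.C a : Polynomial k) ≠ 0 := by
    intro h
    have := congrArg Polynomial.natDegree h
    simp [Polynomial.natDegree_X_pow_sub_C] at this
  have hle : (minpoly k b).natDegree ≤ 2 := by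
    have := Polynomial.natDegree_le_of_dvd hdvd2 hne
    simpa [Polynomial.natDegree_X_pow_sub_C] using this
  have hpos : 0 < (minpoly k b).natDegree := minpoly.natDegree_pos hint
  have hoddd : Odd (minpoly k b).natDegree := hodd.of_dvd_nat hdvd
  have h1 : (minpoly k b).natDegree = 1 := by
    interval_cases h : (minpoly k b).natDegree
    · rfl
    · exact absurd hoddd (by simp [h])
  obtain ⟨c, hc⟩ := minpoly.natDegree_eq_one_iff.mp h1
  refine ⟨c, ?_⟩
  have : (algebraMap k K) (c ^ 2) = algebraMap k K a := by
    rw [map_pow, hc, hb]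
  exact (algebraMap k K).injective this
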